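/- Let 0 ≤ m < n be integers, let x_0,…,x_n ∈ ℝ^n be affinely independent with T = conv{x_0,…,x_n}, let λ_0(x),…,λ_n(x) be the barycentric coordinates with respect to x_0,…,x_n, and set λ_f(x) = (λ_0(x),…,λ_m(x)). Let v : ℝ^n → ℝ be continuously differentiable. Then the function F(x) = ⨍_T v(G_m(λ_f(x), y)) dy is differentiable at every x ∈ ℝ^n, and for every h ∈ ℝ^n its derivative satisfies DF(x)h = ⨍_T Dv(G_m(λ_f(x), y)) [ Σ_{j=0}^m (Dλ_j h)(x_j − y) ] dy, where Dλ_j denotes the constant differential of the affine barycentric coordinate function λ_j and Dv the total derivative of v. (Differentiation under the integral for the pulled-back averaging operator.) -/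

import Mathlib

open Finset MeasureTheory

/-- `b(λ) = 1 - Σ_{j=0}^m λ_j`. -/
noncomputable def bfun (m : ℕ) (lam : Fin (m + 1) → ℝ) : ℝ := 1 - ∑ j, lam j

/-- `G_m(λ, y) = Σ_{j=0}^m λ_j x_j + b(λ) y`. -/
noncomputable def Gmap (n m : ℕ) (x : Fin (m + 1) → Fin n → ℝ)
    (lam : Fin (m + 1) → ℝ) (y : Fin n → ℝ) : Fin n → ℝ :=
  (∑ j, lam j • x j) + bfun m lam • y

/-- The averaged pull-back `⨍_T v(G_m(λ, y)) dy = vol(T)⁻¹ ∫_T v(G_m(λ, y)) dy`. -/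
noncomputable def Avg (n m : ℕ) (x : Fin (m + 1) → Fin n → ℝ) (T : Set (Fin n → ℝ))
    (v : (Fin n → ℝ) → ℝ) (lam : Fin (m + 1) → ℝ) : ℝ :=
  (volume T).toReal⁻¹ * ∫ y in T, v (Gmap n m x lam y)

section AuxAvg
open Metric

noncomputable def Lmap (n m : ℕ) (xf : Fin (m + 1) → Fin n → ℝ)
    (lamf : Fin (m + 1) → ((Fin n → ℝ) →ᵃ[ℝ] ℝ)) (y : Fin n → ℝ) :
    (Fin n → ℝ) →L[ℝ] (Fin n → ℝ) :=
  ∑ j, (LinearMap.toContinuousLinearMap (lamf j).linear).smulRight (xf j - y)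

lemma Gmap_eq (n m : ℕ) (xf : Fin (m + 1) → Fin n → ℝ) (l : Fin (m + 1) → ℝ)
    (y : Fin n → ℝ) : Gmap n m xf l y = y + ∑ j, l j • (xf j - y) := by
  simp only [Gmap, bfun, smul_sub, Finset.sum_sub_distrib, sub_smul, one_smul, Finset.sum_smul]
  abel

lemma affine_hasFDerivAt (n : ℕ) (f : (Fin n → ℝ) →ᵃ[ℝ] ℝ) (z : Fin n → ℝ) :
    HasFDerivAt f (LinearMap.toContinuousLinearMap f.linear) z := by
  have hfe : (f : (Fin n → ℝ) → ℝ) = fun w => (LinearMap.toContinuousLinearMap f.linear) w + f 0 := by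
    funext w
    conv_lhs => rw [AffineMap.decomp]
    rfl
  rw [hfe]
  exact (LinearMap.toContinuousLinearMap f.linear).hasFDerivAt.add_const (f 0)

lemma hasFDerivAt_G (n m : ℕ) (xf : Fin (m + 1) → Fin n → ℝ)
    (lamf : Fin (m + 1) → ((Fin n → ℝ) →ᵃ[ℝ] ℝ)) (y z : Fin n → ℝ) :
    HasFDerivAt (fun z => Gmap n m xf (fun i => lamf i z) y) (Lmap n m xf lamf y) z := by
  have h1 : (fun z => Gmap n m xf (fun i => lamf i z) y)
      = fun z => y + ∑ j, (lamf j z) • (xf j - y) := by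
    funext z; exact Gmap_eq n m xf _ y
  rw [h1, Lmap]
  exact (HasFDerivAt.fun_sum (u := Finset.univ) (fun j _ =>
    (affine_hasFDerivAt n (lamf j) z).smul_const (xf j - y))).const_add y

lemma contG (n m : ℕ) (xf : Fin (m + 1) → Fin n → ℝ)
    (lamf : Fin (m + 1) → ((Fin n → ℝ) →ᵃ[ℝ] ℝ)) :
    Continuous (fun p : (Fin n → ℝ) × (Fin n → ℝ) =>
      Gmap n m xf (fun i => lamf i p.1) p.2) := by
  have hc : ∀ j, Continuous (fun p : (Fin n → ℝ) × (Fin n → ℝ) => lamf j p.1) := fun j =>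
    ((lamf j).continuous_of_finiteDimensional).comp continuous_fst
  simp only [funext (fun p => Gmap_eq n m xf (fun i => lamf i (Prod.fst p)) (Prod.snd p))]
  exact continuous_snd.add (continuous_finset_sum _ fun j _ =>
    (hc j).smul (continuous_const.sub continuous_snd))

lemma contL (n m : ℕ) (xf : Fin (m + 1) → Fin n → ℝ)
    (lamf : Fin (m + 1) → ((Fin n → ℝ) →ᵃ[ℝ] ℝ)) :
    Continuous (Lmap n m xf lamf) := by
  unfold Lmap
  exact continuous_finset_sum _ fun j _ =>
    ((ContinuousLinearMap.smulRightL ℝ (Fin n → ℝ) (Fin n → ℝ)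
      (LinearMap.toContinuousLinearMap (lamf j).linear)).continuous).comp
      (continuous_const.sub continuous_id)

lemma aux_hasFDerivAt (n m : ℕ) (xf : Fin (m + 1) → Fin n → ℝ)
    (lamf : Fin (m + 1) → ((Fin n → ℝ) →ᵃ[ℝ] ℝ))
    (T : Set (Fin n → ℝ)) (hT : IsCompact T)
    (v : (Fin n → ℝ) → ℝ) (hv : ContDiff ℝ 1 v) (z : Fin n → ℝ) :
    HasFDerivAt (fun z => ∫ y in T, v (Gmap n m xf (fun i => lamf i z) y))
      (∫ y in T, (fderiv ℝ v (Gmap n m xf (fun i => lamf i z) y)).comp (Lmap n m xf lamf y)) z := by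
  set G : (Fin n → ℝ) → (Fin n → ℝ) → (Fin n → ℝ) :=
    fun z y => Gmap n m xf (fun i => lamf i z) y with hG
  have hGc := contG n m xf lamf
  have hvd : Differentiable ℝ v := hv.differentiable one_ne_zero
  have hfc : Continuous (fderiv ℝ v) := hv.continuous_fderiv one_ne_zero
  -- compact image
  set K : Set (Fin n → ℝ) := (fun p : (Fin n → ℝ) × (Fin n → ℝ) => G p.1 p.2) ''
    (closedBall z 1 ×ˢ T) with hK
  have hKc : IsCompact K := ((isCompact_closedBall z 1).prod hT).image hGc
  obtain ⟨C1, hC1⟩ := hKc.exists_bound_of_continuousOn (hfc.continuousOn)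
  obtain ⟨C2, hC2⟩ := hT.exists_bound_of_continuousOn ((contL n m xf lamf).continuousOn)
  have hbd : ∀ y ∈ T, ∀ z' ∈ ball z 1,
      ‖(fderiv ℝ v (G z' y)).comp (Lmap n m xf lamf y)‖ ≤ max C1 0 * max C2 0 := by
    intro y hy z' hz'
    refine (ContinuousLinearMap.opNorm_comp_le _ _).trans (mul_le_mul ?_ ?_ (norm_nonneg _)
      (le_max_right _ _))
    · exact le_trans (hC1 _ ⟨(z', y), ⟨ball_subset_closedBall hz', hy⟩, rfl⟩) (le_max_left _ _)
    · exact le_trans (hC2 _ hy) (le_max_left _ _)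
  refine hasFDerivAt_integral_of_dominated_of_fderiv_le (𝕜 := ℝ) (s := ball z 1)
    (F := fun z' y => v (G z' y))
    (F' := fun z' y => (fderiv ℝ v (G z' y)).comp (Lmap n m xf lamf y))
    (bound := fun _ => max C1 0 * max C2 0) (ball_mem_nhds z one_pos) ?_ ?_ ?_ ?_ ?_ ?_
  · exact Filter.Eventually.of_forall fun z' =>
      ((hv.continuous.comp (hGc.comp (Continuous.prodMk_right z'))).aestronglyMeasurable)
  · exact ((hv.continuous.comp (hGc.comp (Continuous.prodMk_right z))).continuousOn).integrableOn_compact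
      hT
  · exact (Continuous.clm_comp (hfc.comp (hGc.comp (Continuous.prodMk_right z)))
      (contL n m xf lamf)).aestronglyMeasurable
  · exact (ae_restrict_iff' hT.measurableSet).2 (Filter.Eventually.of_forall fun y hy z' hz' =>
      hbd y hy z' hz')
  · exact integrableOn_const hT.measure_lt_top.ne
  · exact (ae_restrict_iff' hT.measurableSet).2 (Filter.Eventually.of_forall fun y hy z' _ =>
      ((hvd (G z' y)).hasFDerivAt.comp z' (hasFDerivAt_G n m xf lamf y z')))

end AuxAvg

/-- Differentiation under the integral for the pulled-back averaging operator: for `v`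
continuously differentiable, `F(z) = ⨍_T v(G_m(λ_f(z), y)) dy` is differentiable
everywhere and `DF(z)h = ⨍_T Dv(G_m(λ_f(z), y)) [Σ_{j≤m} (Dλ_j h)(x_j − y)] dy`, where
`Dλ_j` is the (constant) linear part of the affine barycentric coordinate `λ_j`. -/
theorem average_fderiv (n m : ℕ) (hmn : m < n)
    (x : Fin (n + 1) → Fin n → ℝ) (hx : AffineIndependent ℝ x)
    (lam : Fin (n + 1) → ((Fin n → ℝ) →ᵃ[ℝ] ℝ))
    (hlam_sum : ∀ z : Fin n → ℝ, ∑ i, lam i z = 1)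
    (hlam_basis : ∀ i j, lam i (x j) = if i = j then 1 else 0)
    (v : (Fin n → ℝ) → ℝ) (hv : ContDiff ℝ 1 v) :
    Differentiable ℝ (fun z : Fin n → ℝ =>
      Avg n m (fun j : Fin (m + 1) => x (Fin.castLE (by omega) j))
        (convexHull ℝ (Set.range x)) v
        (fun i : Fin (m + 1) => lam (Fin.castLE (by omega) i) z)) ∧
    ∀ (z h : Fin n → ℝ),
      fderiv ℝ (fun z : Fin n → ℝ =>
          Avg n m (fun j : Fin (m + 1) => x (Fin.castLE (by omega) j))
            (convexHull ℝ (Set.range x)) v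
            (fun i : Fin (m + 1) => lam (Fin.castLE (by omega) i) z)) z h =
        (volume (convexHull ℝ (Set.range x))).toReal⁻¹ *
          ∫ y in convexHull ℝ (Set.range x),
            fderiv ℝ v (Gmap n m (fun j : Fin (m + 1) => x (Fin.castLE (by omega) j))
                (fun i : Fin (m + 1) => lam (Fin.castLE (by omega) i) z) y)
              (∑ j : Fin (m + 1), ((lam (Fin.castLE (by omega) j)).linear h) •
                (x (Fin.castLE (by omega) j) - y)) := by
  have hle : m + 1 ≤ n + 1 := by omega
  set T := convexHull ℝ (Set.range x) with hTdef
  have hT : IsCompact T := (Set.finite_range x).isCompact_convexHull ℝ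
  set xf : Fin (m + 1) → Fin n → ℝ := fun j => x (Fin.castLE hle j) with hxf
  set lamf : Fin (m + 1) → ((Fin n → ℝ) →ᵃ[ℝ] ℝ) := fun i => lam (Fin.castLE hle i) with hlf
  set c : ℝ := (volume T).toReal⁻¹ with hc
  set G : (Fin n → ℝ) → (Fin n → ℝ) → (Fin n → ℝ) :=
    fun z y => Gmap n m xf (fun i => lamf i z) y with hG
  have hGc := contG n m xf lamf
  have hfc : Continuous (fderiv ℝ v) := hv.continuous_fderiv one_ne_zero
  have intF' : ∀ z, IntegrableOn
      (fun y => (fderiv ℝ v (G z y)).comp (Lmap n m xf lamf y)) T volume := fun z =>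
    ((Continuous.clm_comp (hfc.comp (hGc.comp (Continuous.prodMk_right z)))
      (contL n m xf lamf)).continuousOn).integrableOn_compact hT
  have key : ∀ z, HasFDerivAt (fun z => Avg n m xf T v (fun i => lamf i z))
      (c • ∫ y in T, (fderiv ℝ v (G z y)).comp (Lmap n m xf lamf y)) z := fun z => by
    have h1 := aux_hasFDerivAt n m xf lamf T hT v hv z
    simpa [Avg] using h1.const_mul c
  constructor
  · exact fun z => ((key z).differentiableAt : _)
  · intro z h
    rw [(key z).fderiv, ContinuousLinearMap.smul_apply,
      ContinuousLinearMap.integral_apply (intF' z), smul_eq_mul]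
    congr 1
    refine integral_congr_ae (Filter.Eventually.of_forall fun y => ?_)
    simp [Lmap, ContinuousLinearMap.comp_apply, ContinuousLinearMap.smulRight_apply,
      LinearMap.coe_toContinuousLinearMap', G]
    rfl
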